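/- Let G be a bridgeless graph with d(G)=4 and let uv be an edge with l_G(uv) = g*(G) ≥ 6. If B ≠ B_1, then K'_1 = ∅. -/

import Mathlib

/-- A multigraph: vertices `V`, edges `E`, each edge has two distinct endpoints. -/
structure Multigraph (V : Type*) (E : Type*) where
  ends : E → Sym2 V
  loopless : ∀ e, ¬ (ends e).IsDiag

namespace Multigraph

variable {V E : Type*}

/-- Adjacency in a multigraph: some edge joins `x` and `y`. -/
def Adjm (G : Multigraph V E) (x y : V) : Prop := ∃ e, G.ends e = s(x, y)

/-- The underlying simple graph of a multigraph. -/
def toSimple (G : Multigraph V E) : SimpleGraph V where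
  Adj x y := x ≠ y ∧ G.Adjm x y
  symm := by
    constructor
    rintro x y ⟨hne, e, he⟩
    exact ⟨hne.symm, e, he.trans (Sym2.eq_swap)⟩
  loopless := by constructor; rintro x ⟨hne, -⟩; exact hne rfl

/-- Distance between two vertices (length of a shortest path). -/
noncomputable def dist (G : Multigraph V E) (x y : V) : ℕ := G.toSimple.dist x y

/-- The diameter of a multigraph. -/
noncomputable def diam (G : Multigraph V E) : ℕ := sSup {n | ∃ x y, G.dist x y = n}

/-- The multigraph obtained by deleting the edge `e₀`. -/
def deleteEdge (G : Multigraph V E) (e₀ : E) : Multigraph V {e : E // e ≠ e₀} where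
  ends e := G.ends e.1
  loopless e := G.loopless e.1

/-- A (connected) multigraph is bridgeless if deleting any single edge leaves it connected. -/
def Bridgeless (G : Multigraph V E) : Prop :=
  ∀ e : E, ((G.deleteEdge e).toSimple).Connected

/-- Walks in a multigraph, recording the edges used. -/
inductive Walk (G : Multigraph V E) : V → V → Type _
  | nil {v : V} : Walk G v v
  | cons {x y z : V} (e : E) (he : G.ends e = s(x, y)) (p : Walk G y z) : Walk G x z

namespace Walk

variable {G : Multigraph V E}

/-- The length (number of edges) of a walk. -/
def length : ∀ {x y : V}, G.Walk x y → ℕ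
  | _, _, .nil => 0
  | _, _, .cons _ _ p => p.length + 1

/-- The list of edges of a walk. -/
def edges : ∀ {x y : V}, G.Walk x y → List E
  | _, _, .nil => []
  | _, _, .cons e _ p => e :: p.edges

/-- The list of vertices of a walk. -/
def support : ∀ {x y : V}, G.Walk x y → List V
  | x, _, .nil => [x]
  | x, _, .cons _ _ p => x :: p.support

/-- A closed walk is a cycle if its edges are distinct and its vertices
(other than the repeated base point) are distinct. -/
def IsCycle {v : V} (p : G.Walk v v) : Prop :=
  p.edges.Nodup ∧ p.support.tail.Nodup ∧ 0 < p.length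

end Walk

/-- The edge girth of `e`: the length of a shortest cycle containing `e`. -/
noncomputable def edgeGirth (G : Multigraph V E) (e : E) : ℕ :=
  sInf {n | ∃ (v : V) (p : G.Walk v v), p.IsCycle ∧ e ∈ p.edges ∧ p.length = n}

/-- The maximum edge girth `g*(G)`. -/
noncomputable def maxEdgeGirth (G : Multigraph V E) : ℕ :=
  sSup (Set.range fun e => G.edgeGirth e)

/-- An orientation of a multigraph: each edge is assigned a direction. -/
structure Orientation (G : Multigraph V E) where
  dir : E → V × V
  compat : ∀ e, s((dir e).1, (dir e).2) = G.ends e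

/-- Arcs of an orientation. -/
def Orientation.DAdj {G : Multigraph V E} (o : G.Orientation) (x y : V) : Prop :=
  ∃ e, o.dir e = (x, y)

/-- Directed distance in an orientation (`⊤` if unreachable). -/
noncomputable def Orientation.ddist {G : Multigraph V E} (o : G.Orientation) (x y : V) : ℕ∞ :=
  sInf {n : ℕ∞ | ∃ l : List V, List.Chain o.DAdj x l ∧
    (x :: l).getLast (List.cons_ne_nil x l) = y ∧ (l.length : ℕ∞) = n}

/-- An orientation is strong if every vertex is reachable from every vertex by a directed path. -/
def Orientation.IsStrong {G : Multigraph V E} (o : G.Orientation) : Prop :=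
  ∀ x y : V, o.ddist x y ≠ ⊤

/-- The diameter of an orientation. -/
noncomputable def Orientation.odiam {G : Multigraph V E} (o : G.Orientation) : ℕ∞ :=
  ⨆ (x : V) (y : V), o.ddist x y

end Multigraph

namespace Multigraph

variable {V E : Type*}

/-- `S G u v i j` is the set of vertices at distance `i` from `u` and `j` from `v`. -/
noncomputable def S (G : Multigraph V E) (u v : V) (i j : ℕ) : Set V :=
  {w | G.dist w u = i ∧ G.dist w v = j}

/-- The neighbourhood of a vertex. -/
def nbhd (G : Multigraph V E) (w : V) : Set V := {x | G.Adjm w x}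

end Multigraph

namespace Multigraph

variable {V E : Type*} (G : Multigraph V E) (u v : V)

/-- `A' = {w ∈ S₁₂ : N(w) ⊆ S₁₂ ∪ {u}}`. -/
noncomputable def setA' : Set V := {w ∈ G.S u v 1 2 | G.nbhd w ⊆ G.S u v 1 2 ∪ {u}}
/-- `A = S₁₂ − A'`. -/
noncomputable def setA : Set V := G.S u v 1 2 \ G.setA' u v
/-- `B' = {w ∈ S₂₁ : N(w) ⊆ S₂₁ ∪ {v}}`. -/
noncomputable def setB' : Set V := {w ∈ G.S u v 2 1 | G.nbhd w ⊆ G.S u v 2 1 ∪ {v}}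
/-- `B = S₂₁ − B'`. -/
noncomputable def setB : Set V := G.S u v 2 1 \ G.setB' u v
/-- `I' = {w ∈ S₂₃ : N(w) ⊆ S₂₃ ∪ A}`. -/
noncomputable def setI' : Set V := {w ∈ G.S u v 2 3 | G.nbhd w ⊆ G.S u v 2 3 ∪ G.setA u v}
/-- `I = S₂₃ − I'`. -/
noncomputable def setI : Set V := G.S u v 2 3 \ G.setI' u v
/-- `J' = {w ∈ S₃₂ : N(w) ⊆ S₃₂ ∪ B}`. -/
noncomputable def setJ' : Set V := {w ∈ G.S u v 3 2 | G.nbhd w ⊆ G.S u v 3 2 ∪ G.setB u v}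
/-- `J = S₃₂ − J'`. -/
noncomputable def setJ : Set V := G.S u v 3 2 \ G.setJ' u v
/-- `K' = {w ∈ S₃₄ : N(w) ⊆ S₃₄ ∪ I}`. -/
noncomputable def setK' : Set V := {w ∈ G.S u v 3 4 | G.nbhd w ⊆ G.S u v 3 4 ∪ G.setI u v}
/-- `K = S₃₄ − K'`. -/
noncomputable def setK : Set V := G.S u v 3 4 \ G.setK' u v
/-- `L' = {w ∈ S₄₃ : N(w) ⊆ S₄₃ ∪ J}`. -/
noncomputable def setL' : Set V := {w ∈ G.S u v 4 3 | G.nbhd w ⊆ G.S u v 4 3 ∪ G.setJ u v}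
/-- `L = S₄₃ − L'`. -/
noncomputable def setL : Set V := G.S u v 4 3 \ G.setL' u v
/-- `M' = {w ∈ S₄₄ : exactly one edge of G joins w to S₃₃ ∪ K ∪ L}`. -/
noncomputable def setM' : Set V :=
  {w ∈ G.S u v 4 4 |
    ∃! e : E, ∃ x ∈ G.S u v 3 3 ∪ G.setK u v ∪ G.setL u v, G.ends e = s(w, x)}
/-- `M = S₄₄ − M'`. -/
noncomputable def setM : Set V := G.S u v 4 4 \ G.setM' u v

end Multigraph

namespace Multigraph

variable {V E : Type*} (G : Multigraph V E) (u v : V)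

/-- `I₁ = I ∩ N(J)`. -/
noncomputable def setI1 : Set V := G.setI u v ∩ {w | ∃ x ∈ G.setJ u v, G.Adjm w x}
/-- `J₁ = J ∩ N(I)`. -/
noncomputable def setJ1 : Set V := G.setJ u v ∩ {w | ∃ x ∈ G.setI u v, G.Adjm w x}
/-- `B₁ = B ∩ N(J₁)`. -/
noncomputable def setB1 : Set V := G.setB u v ∩ {w | ∃ x ∈ G.setJ1 u v, G.Adjm w x}
/-- `K₁ = K ∩ N(S₃₃ ∪ L)`. -/
noncomputable def setK1 : Set V :=
  G.setK u v ∩ {w | ∃ x ∈ G.S u v 3 3 ∪ G.setL u v, G.Adjm w x}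
/-- `K₂ = K − K₁`. -/
noncomputable def setK2 : Set V := G.setK u v \ G.setK1 u v

/-- The distance from a vertex to a set of vertices. -/
noncomputable def distSet (w : V) (X : Set V) : ℕ := sInf {n | ∃ x ∈ X, G.dist w x = n}

/-- `K'₁` consists of those `w ∈ K'` with `d(w, B) = 4` such that every shortest path
`w i₁ i₂ i₃ i₄` from `w` to a vertex `i₄ ∈ B` satisfies `i₁ ∈ K₂`, `i₂ ∈ I₁`, `i₃ ∈ J₁`. -/
noncomputable def setK'1 : Set V :=
  {w ∈ G.setK' u v | G.distSet w (G.setB u v) = 4 ∧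
    ∀ i1 i2 i3 i4 : V, i4 ∈ G.setB u v →
      G.Adjm w i1 → G.Adjm i1 i2 → G.Adjm i2 i3 → G.Adjm i3 i4 →
      i1 ∈ G.setK2 u v ∧ i2 ∈ G.setI1 u v ∧ i3 ∈ G.setJ1 u v}

end Multigraph

/-- **Proposition 2.** Let `G` be a bridgeless graph with `d(G) = 4` and let
`uv` be an edge with `l_G(uv) = g*(G) ≥ 6`. If `B ≠ B₁`, then `K'₁ = ∅`. -/
theorem stmt14 {V E : Type*} [Fintype V] [Fintype E] (G : Multigraph V E)
    (hconn : G.toSimple.Connected) (hbridgeless : G.Bridgeless) (hdiam : G.diam = 4)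
    (u v : V) (e : E) (he : G.ends e = s(u, v))
    (hmax : G.edgeGirth e = G.maxEdgeGirth) (h6 : 6 ≤ G.maxEdgeGirth)
    (hB : G.setB u v ≠ G.setB1 u v) :
    G.setK'1 u v = ∅ := by
  ext w
  simp only [Set.mem_empty_iff_false, iff_false]
  rintro ⟨hwK', hdist4, hpath⟩
  -- find b ∈ B \ B₁
  have hsub : G.setB1 u v ⊆ G.setB u v := Set.inter_subset_left
  obtain ⟨b, hbB, hbB1⟩ : ∃ b, b ∈ G.setB u v ∧ b ∉ G.setB1 u v := by
    by_contra h
    push_neg at h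
    exact hB (Set.Subset.antisymm (fun x hx => h x hx) hsub)
  -- dist w b ≥ 4
  have hge : 4 ≤ G.dist w b := by
    have : G.dist w b ∈ {n | ∃ x ∈ G.setB u v, G.dist w x = n} := ⟨b, hbB, rfl⟩
    have h' := Nat.sInf_le this
    rw [show sInf {n | ∃ x ∈ G.setB u v, G.dist w x = n} = G.distSet w (G.setB u v) from rfl,
      hdist4] at h'
    exact h'
  -- dist w b ≤ 4
  have hle : G.dist w b ≤ 4 := by
    have hfin : ({n | ∃ x y, G.dist x y = n} : Set ℕ).Finite := by
      have : ({n | ∃ x y, G.dist x y = n} : Set ℕ)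
          = Set.range (fun p : V × V => G.dist p.1 p.2) := by
        ext n; constructor
        · rintro ⟨x, y, h⟩; exact ⟨(x, y), h⟩
        · rintro ⟨⟨x, y⟩, h⟩; exact ⟨x, y, h⟩
      rw [this]; exact Set.finite_range _
    have hmem : G.dist w b ∈ {n | ∃ x y, G.dist x y = n} := ⟨w, b, rfl⟩
    have := le_csSup hfin.bddAbove hmem
    rwa [show sSup {n | ∃ x y, G.dist x y = n} = G.diam from rfl, hdiam] at this
  have hdwb : G.toSimple.dist w b = 4 := le_antisymm hle hge
  obtain ⟨p, hp⟩ := hconn.exists_walk_length_eq_dist w b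
  rw [hdwb] at hp
  cases p with
  | nil => simp [SimpleGraph.Walk.length] at hp
  | cons h1 p =>
    cases p with
    | nil => simp [SimpleGraph.Walk.length] at hp
    | cons h2 p =>
      cases p with
      | nil => simp [SimpleGraph.Walk.length] at hp
      | cons h3 p =>
        cases p with
        | nil => simp [SimpleGraph.Walk.length] at hp
        | cons h4 p =>
          cases p with
          | cons h5 p => simp [SimpleGraph.Walk.length] at hp
          | nil =>
            obtain ⟨_, e1, he1⟩ := h1
            obtain ⟨_, e2, he2⟩ := h2
            obtain ⟨_, e3, he3⟩ := h3
            obtain ⟨_, e4, he4⟩ := h4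
            obtain ⟨-, -, hJ1⟩ := hpath _ _ _ b hbB ⟨e1, he1⟩ ⟨e2, he2⟩ ⟨e3, he3⟩ ⟨e4, he4⟩
            exact hbB1 ⟨hbB, _, hJ1, ⟨e4, he4.trans Sym2.eq_swap⟩⟩
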